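/- arXiv:2202.06400 — 5 statements merged into one kernel-verified Lean document; each statement's English description precedes it below -/
import Mathlib

section
/- Let W be an n × n real symmetric matrix with W − I_n positive semidefinite, let z ∈ ℝⁿ, let c > 0, and set V = W + c z zᵀ. Then for every u ∈ ℝⁿ, (zᵀ V⁻² u)² ≤ 2 ((zᵀ W⁻² u)² + (zᵀ W⁻¹ u)²). -/
open Matrix

lemma aux_vecMulVec_mulVec {n : ℕ} (z v : Fin n → ℝ) :
    vecMulVec z z *ᵥ v = (z ⬝ᵥ v) • z := by
  ext i
  simp [mulVec, vecMulVec_apply, dotProduct, Finset.sum_mul, Finset.mul_sum, mul_assoc,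
    mul_comm, mul_left_comm]

lemma aux_final (s t a b : ℝ) (hsp : 0 < s) (hs1 : s ≤ 1) (ht0 : 0 ≤ t) (ht1 : t ≤ 1) :
    (s * a - t * b) ^ 2 ≤ 2 * (a ^ 2 + b ^ 2) := by
  have hs2 : s ^ 2 ≤ 1 := by nlinarith
  have ht2 : t ^ 2 ≤ 1 := by nlinarith
  have hst : s * t ≤ 1 := mul_le_one₀ hs1 ht0 ht1
  nlinarith [mul_nonneg (sub_nonneg.2 hs2) (sq_nonneg a),
    mul_nonneg (sub_nonneg.2 ht2) (sq_nonneg b),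
    mul_nonneg (sub_nonneg.2 hst) (sq_nonneg a),
    mul_nonneg (sub_nonneg.2 hst) (sq_nonneg b),
    mul_nonneg (mul_nonneg hsp.le ht0) (sq_nonneg (a + b))]

/-- For `W` real symmetric with `W − Iₙ` positive semidefinite, `c > 0` and
`V = W + c z zᵀ`, the cross terms of the squared inverse satisfy
`(zᵀ V⁻² u)² ≤ 2 ((zᵀ W⁻² u)² + (zᵀ W⁻¹ u)²)` for every `u`. -/
theorem leave_one_out_sq_cross_term_bound
    {n : ℕ} (W : Matrix (Fin n) (Fin n) ℝ) (hW : W.IsSymm)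
    (hpsd : (W - 1).PosSemidef)
    (z : Fin n → ℝ) (c : ℝ) (hc : 0 < c) :
    ∀ u : Fin n → ℝ,
      (z ⬝ᵥ (((W + c • vecMulVec z z)⁻¹ * (W + c • vecMulVec z z)⁻¹) *ᵥ u)) ^ 2 ≤
        2 * ((z ⬝ᵥ ((W⁻¹ * W⁻¹) *ᵥ u)) ^ 2 + (z ⬝ᵥ (W⁻¹ *ᵥ u)) ^ 2) := by
  intro u
  set Z : Matrix (Fin n) (Fin n) ℝ := vecMulVec z z with hZdef
  have hWpos : W.PosDef := by
    have h : W = (W - 1) + 1 := by abel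
    rw [h]
    exact Matrix.PosDef.posSemidef_add hpsd Matrix.PosDef.one
  have hWdet : IsUnit W.det := isUnit_iff_ne_zero.mpr hWpos.det_pos.ne'
  have hWinv : W * W⁻¹ = 1 := mul_nonsing_inv W hWdet
  have hWinv' : W⁻¹ * W = 1 := nonsing_inv_mul W hWdet
  have hWipos : W⁻¹.PosDef := hWpos.inv
  set ρ : ℝ := z ⬝ᵥ W⁻¹ *ᵥ z with hρdef
  set φ : ℝ := z ⬝ᵥ (W⁻¹ * W⁻¹) *ᵥ z with hφdef
  have hρ0 : 0 ≤ ρ := by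
    simpa [star_trivial] using hWipos.posSemidef.dotProduct_mulVec_nonneg z
  have hs0 : (0:ℝ) < 1 + c * ρ := by nlinarith
  set k : ℝ := c / (1 + c * ρ) with hkdef
  have hk0 : 0 ≤ k := div_nonneg hc.le hs0.le
  set M : Matrix (Fin n) (Fin n) ℝ := W⁻¹ - k • (W⁻¹ * Z * W⁻¹) with hMdef
  have hZW : Z * W⁻¹ * Z = ρ • Z := by
    ext i j
    simp only [hZdef, mul_apply, vecMulVec_apply, Matrix.smul_apply, smul_eq_mul, hρdef,
      dotProduct, mulVec, Finset.sum_mul, Finset.mul_sum]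
    rw [Finset.sum_comm]
    refine Finset.sum_congr rfl fun p _ => Finset.sum_congr rfl fun q _ => by ring
  -- explicit inverse check
  have h1 : W * M = 1 - k • (Z * W⁻¹) := by
    rw [hMdef, Matrix.mul_sub, Matrix.mul_smul, ← Matrix.mul_assoc, ← Matrix.mul_assoc,
      hWinv, Matrix.one_mul]
  have hZ2 : Z * (W⁻¹ * Z * W⁻¹) = ρ • (Z * W⁻¹) := by
    rw [← Matrix.mul_assoc, ← Matrix.mul_assoc, hZW, Matrix.smul_mul]
  have h2 : (c • Z) * M = c • (Z * W⁻¹) - (c * (k * ρ)) • (Z * W⁻¹) := by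
    rw [Matrix.smul_mul, hMdef, Matrix.mul_sub, Matrix.mul_smul, hZ2, smul_smul,
      smul_sub, smul_smul]
  have hcoef : c - c * (k * ρ) = k := by
    rw [hkdef]
    field_simp
    ring
  have hVM : (W + c • Z) * M = 1 := by
    rw [Matrix.add_mul, h1, h2, ← sub_smul, hcoef]
    abel
  have hVinv : (W + c • Z)⁻¹ = M := inv_eq_right_inv hVM
  -- vector identity
  have hvec : ∀ v : Fin n → ℝ,
      (W⁻¹ * Z * W⁻¹) *ᵥ v = (z ⬝ᵥ W⁻¹ *ᵥ v) • (W⁻¹ *ᵥ z) := by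
    intro v
    rw [← Matrix.mulVec_mulVec, ← Matrix.mulVec_mulVec, hZdef, aux_vecMulVec_mulVec,
      Matrix.mulVec_smul]
  have hdotM : ∀ v : Fin n → ℝ, z ⬝ᵥ M *ᵥ v = (1 - k * ρ) * (z ⬝ᵥ W⁻¹ *ᵥ v) := by
    intro v
    rw [hMdef, Matrix.sub_mulVec, dotProduct_sub, Matrix.smul_mulVec,
      dotProduct_smul, hvec, dotProduct_smul, ← hρdef]
    simp only [smul_eq_mul]
    ring
  set a : ℝ := z ⬝ᵥ (W⁻¹ * W⁻¹) *ᵥ u with hadef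
  set b : ℝ := z ⬝ᵥ W⁻¹ *ᵥ u with hbdef
  have hmain : z ⬝ᵥ ((W + c • Z)⁻¹ * (W + c • Z)⁻¹) *ᵥ u
      = (1 - k * ρ) * (a - k * (φ * b)) := by
    rw [hVinv, ← Matrix.mulVec_mulVec, hdotM]
    congr 1
    conv_lhs => rw [hMdef]
    rw [Matrix.sub_mulVec, Matrix.mulVec_sub, dotProduct_sub, Matrix.smul_mulVec,
      Matrix.mulVec_smul, dotProduct_smul, hvec, Matrix.mulVec_smul, dotProduct_smul,
      Matrix.mulVec_mulVec, Matrix.mulVec_mulVec, ← hφdef, ← hbdef, ← hadef]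
    simp only [smul_eq_mul]
    ring
  rw [hmain]
  -- bounds on φ
  have hφ0 : 0 ≤ φ := by
    have h2 : W⁻¹ * W⁻¹ = W⁻¹ᴴ * W⁻¹ := by rw [hWipos.isHermitian.eq]
    have h3 := (Matrix.posSemidef_conjTranspose_mul_self W⁻¹).dotProduct_mulVec_nonneg z
    rw [← h2] at h3
    simpa [star_trivial, hφdef] using h3
  have hφρ : φ ≤ ρ := by
    have hconj : (W⁻¹ᴴ * (W - 1) * W⁻¹).PosSemidef :=
      hpsd.conjTranspose_mul_mul_same W⁻¹
    have heq : W⁻¹ᴴ * (W - 1) * W⁻¹ = W⁻¹ - W⁻¹ * W⁻¹ := by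
      rw [hWipos.isHermitian.eq, Matrix.mul_sub, Matrix.mul_one, Matrix.sub_mul, hWinv',
        Matrix.one_mul]
    have h4 := hconj.dotProduct_mulVec_nonneg z
    rw [heq] at h4
    simp only [star_trivial, Matrix.sub_mulVec, dotProduct_sub] at h4
    rw [← hρdef, ← hφdef] at h4
    linarith
  clear_value Z M ρ φ k a b
  -- final scalar inequality
  have hkρ : 1 - k * ρ = 1 / (1 + c * ρ) := by
    rw [hkdef]
    field_simp
    ring
  set s : ℝ := 1 / (1 + c * ρ) with hsdef
  clear_value s
  have hs1 : s ≤ 1 := by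
    rw [hsdef, div_le_one hs0]; nlinarith
  have hsp : 0 < s := by rw [hsdef]; positivity
  set t : ℝ := s * (k * φ) with htdef
  clear_value t
  have ht0 : 0 ≤ t := by rw [htdef]; exact mul_nonneg hsp.le (mul_nonneg hk0 hφ0)
  have htval : t = c * φ / ((1 + c * ρ) ^ 2) := by
    rw [htdef, hkdef, hsdef]
    field_simp
  have ht1 : t ≤ 1 := by
    rw [htval, div_le_one (pow_pos hs0 2)]
    nlinarith [mul_le_mul_of_nonneg_left hφρ hc.le,
      mul_nonneg (mul_nonneg hc.le hc.le) (mul_nonneg hρ0 hρ0)]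
  have hform : (1 - k * ρ) * (a - k * (φ * b)) = s * a - t * b := by
    rw [hkρ, htdef]; ring
  rw [hform]
  exact aux_final s t a b hsp hs1 ht0 ht1
end

section
/- Let W be an n × n real symmetric positive definite matrix, let z ∈ ℝⁿ, let c > 0, and set V = W + c z zᵀ, ρ = zᵀ W⁻¹ z, and φ = zᵀ W⁻² z. Then trace(W⁻¹) − trace(V⁻¹) = cφ / (1 + cρ). If moreover W − I_n is positive semidefinite, then 0 ≤ trace(W⁻¹) − trace(V⁻¹) < 1. -/
open Matrix

variable {n : ℕ}

lemma aux_vmv_mul_vmv (z : Fin n → ℝ) (A : Matrix (Fin n) (Fin n) ℝ) :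
    vecMulVec z z * A * vecMulVec z z = (z ⬝ᵥ A *ᵥ z) • vecMulVec z z := by
  ext i j
  simp only [mul_apply, vecMulVec_apply, Matrix.smul_apply, dotProduct, mulVec, smul_eq_mul,
    Finset.sum_mul, Finset.mul_sum]
  rw [Finset.sum_comm]
  congr 1; ext k
  congr 1; ext l
  ring

lemma aux_trace_mul_vmv (z : Fin n → ℝ) (A : Matrix (Fin n) (Fin n) ℝ) :
    Matrix.trace (A * vecMulVec z z) = z ⬝ᵥ A *ᵥ z := by
  simp only [Matrix.trace, diag, mul_apply, vecMulVec_apply, dotProduct, mulVec,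
    Finset.mul_sum]
  congr 1; ext k
  congr 1; ext l
  ring

lemma aux_vmv_psd (z : Fin n → ℝ) : (vecMulVec z z).PosSemidef := by
  apply Matrix.PosSemidef.of_dotProduct_mulVec_nonneg
  · ext i j; simp [vecMulVec_apply, mul_comm]
  · intro x
    have : star x ⬝ᵥ (vecMulVec z z) *ᵥ x = (z ⬝ᵥ x) * (z ⬝ᵥ x) := by
      simp only [star_trivial, dotProduct, mulVec, vecMulVec_apply, Finset.mul_sum,
        Finset.sum_mul]
      congr 1; ext k; congr 1; ext l; ring
    rw [this]
    exact mul_self_nonneg _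

/-- Leave-one-out trace identity: for `W` real symmetric positive definite, `c > 0`,
`V = W + c z zᵀ`, `ρ = zᵀ W⁻¹ z` and `φ = zᵀ W⁻² z`,
`trace(W⁻¹) − trace(V⁻¹) = cφ / (1 + cρ)`; moreover, if `W − Iₙ` is positive
semidefinite, then `0 ≤ trace(W⁻¹) − trace(V⁻¹) < 1`. -/
theorem leave_one_out_trace_identity
    {n : ℕ} (W : Matrix (Fin n) (Fin n) ℝ) (hW : W.PosDef)
    (z : Fin n → ℝ) (c : ℝ) (hc : 0 < c) :
    (Matrix.trace W⁻¹ - Matrix.trace (W + c • vecMulVec z z)⁻¹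
        = c * (z ⬝ᵥ ((W⁻¹ * W⁻¹) *ᵥ z)) / (1 + c * (z ⬝ᵥ (W⁻¹ *ᵥ z)))) ∧
    ((W - 1).PosSemidef →
      0 ≤ Matrix.trace W⁻¹ - Matrix.trace (W + c • vecMulVec z z)⁻¹ ∧
      Matrix.trace W⁻¹ - Matrix.trace (W + c • vecMulVec z z)⁻¹ < 1) := by
  have hWi : W⁻¹.PosDef := hW.inv
  set Z := vecMulVec z z with hZ
  set ρ := z ⬝ᵥ W⁻¹ *ᵥ z with hρ
  set φ := z ⬝ᵥ (W⁻¹ * W⁻¹) *ᵥ z with hφ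
  have hρ0 : 0 ≤ ρ := by simpa using hWi.posSemidef.dotProduct_mulVec_nonneg z
  have hd : 0 < 1 + c * ρ := by positivity
  set k := c / (1 + c * ρ) with hk
  have hk0 : 0 ≤ k := div_nonneg hc.le hd.le
  have hWm : W * W⁻¹ = 1 := Matrix.mul_nonsing_inv W (isUnit_iff_ne_zero.2 hW.det_pos.ne')
  have hWm' : W⁻¹ * W = 1 := Matrix.nonsing_inv_mul W (isUnit_iff_ne_zero.2 hW.det_pos.ne')
  have hsym : W⁻¹ᵀ = W⁻¹ := by
    ext i j
    conv_rhs => rw [← hWi.isHermitian.eq]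
    simp [conjTranspose_apply]
  -- Sherman-Morrison
  have hVinv : (W + c • Z)⁻¹ = W⁻¹ - k • (W⁻¹ * Z * W⁻¹) := by
    apply inv_eq_right_inv
    have key : Z * W⁻¹ * Z = ρ • Z := aux_vmv_mul_vmv z W⁻¹
    have e1 : W * (W⁻¹ - k • (W⁻¹ * Z * W⁻¹)) = 1 - k • (Z * W⁻¹) := by
      rw [mul_sub, hWm, Matrix.mul_smul, ← Matrix.mul_assoc, ← Matrix.mul_assoc, hWm,
        Matrix.one_mul]
    have e2 : (c • Z) * (W⁻¹ - k • (W⁻¹ * Z * W⁻¹)) =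
        c • (Z * W⁻¹) - (c * (k * ρ)) • (Z * W⁻¹) := by
      have hmid : Z * (W⁻¹ * Z * W⁻¹) = ρ • (Z * W⁻¹) := by
        calc Z * (W⁻¹ * Z * W⁻¹) = (Z * W⁻¹ * Z) * W⁻¹ := by
              simp only [Matrix.mul_assoc]
          _ = ρ • (Z * W⁻¹) := by rw [key, Matrix.smul_mul]
      rw [Matrix.smul_mul, mul_sub, Matrix.mul_smul, hmid, smul_sub, smul_smul, smul_smul]
      ring_nf
    have hcoef : k + c * (k * ρ) = c := by
      rw [hk]
      field_simp
    rw [add_mul, e1, e2]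
    have : (1 : Matrix (Fin n) (Fin n) ℝ) - k • (Z * W⁻¹) +
        (c • (Z * W⁻¹) - (c * (k * ρ)) • (Z * W⁻¹)) =
        1 + (c - (k + c * (k * ρ))) • (Z * W⁻¹) := by module
    rw [this, hcoef, sub_self, zero_smul, add_zero]
  have htr : Matrix.trace W⁻¹ - Matrix.trace (W + c • Z)⁻¹ = k * φ := by
    rw [hVinv, Matrix.trace_sub, Matrix.trace_smul, sub_sub_cancel, smul_eq_mul]
    congr 1
    rw [Matrix.trace_mul_cycle, hφ, ← aux_trace_mul_vmv z (W⁻¹ * W⁻¹), Matrix.mul_assoc]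
  have heq : Matrix.trace W⁻¹ - Matrix.trace (W + c • Z)⁻¹ = c * φ / (1 + c * ρ) := by
    rw [htr, hk, div_mul_eq_mul_div]
  refine ⟨heq, fun hpsd => ?_⟩
  set x := W⁻¹ *ᵥ z with hx
  have hφx : φ = x ⬝ᵥ x := by
    rw [hφ, ← Matrix.mulVec_mulVec, Matrix.dotProduct_mulVec, ← Matrix.mulVec_transpose, hsym]
  have hφ0 : 0 ≤ φ := by rw [hφx]; exact Finset.sum_nonneg fun i _ => mul_self_nonneg _
  have hzx : z = W *ᵥ x := by
    rw [hx, Matrix.mulVec_mulVec, hWm, Matrix.one_mulVec]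
  have hρx : ρ = x ⬝ᵥ W *ᵥ x := by
    rw [hρ, hzx]
    exact dotProduct_comm _ _
  have hφρ : φ ≤ ρ := by
    have h0 := hpsd.dotProduct_mulVec_nonneg x
    simp only [star_trivial, Matrix.sub_mulVec, dotProduct_sub, Matrix.one_mulVec] at h0
    rw [hρx, hφx]
    linarith
  constructor
  · rw [htr]; positivity
  · rw [heq]
    rw [div_lt_one hd]
    nlinarith
end

section
/- Let W be an n × n real symmetric positive definite matrix, let z ∈ ℝⁿ, let c > 0, and set V = W + c z zᵀ, ρ = zᵀ W⁻¹ z, φ = zᵀ W⁻² z, and ψ = zᵀ W⁻³ z. Then trace(V⁻²) = trace(W⁻²) − 2cψ / (1 + cρ) + c²φ² / (1 + cρ)². If moreover W − I_n is positive semidefinite, then |trace(V⁻²) − trace(W⁻²)| < 3. -/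
open Matrix

section helpers
variable {n : ℕ}

lemma mul_vecMulVec' (M : Matrix (Fin n) (Fin n) ℝ) (a b : Fin n → ℝ) :
    M * vecMulVec a b = vecMulVec (M *ᵥ a) b := by
  ext i j
  simp only [Matrix.mul_apply, vecMulVec_apply, mulVec, dotProduct]
  rw [Finset.sum_mul]
  exact Finset.sum_congr rfl fun k _ => by ring

lemma vecMulVec_mul' (M : Matrix (Fin n) (Fin n) ℝ) (a b : Fin n → ℝ) :
    vecMulVec a b * M = vecMulVec a (Mᵀ *ᵥ b) := by
  ext i j
  simp only [Matrix.mul_apply, vecMulVec_apply, mulVec, dotProduct, transpose_apply]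
  rw [Finset.mul_sum]
  exact Finset.sum_congr rfl fun k _ => by ring

lemma vecMulVec_mul_vecMulVec' (a b c d : Fin n → ℝ) :
    vecMulVec a b * vecMulVec c d = (b ⬝ᵥ c) • vecMulVec a d := by
  ext i j
  simp only [Matrix.mul_apply, vecMulVec_apply, Matrix.smul_apply, dotProduct, smul_eq_mul]
  rw [Finset.sum_mul]
  exact Finset.sum_congr rfl fun k _ => by ring

lemma trace_vecMulVec' (a b : Fin n → ℝ) :
    Matrix.trace (vecMulVec a b) = a ⬝ᵥ b := by
  simp [Matrix.trace, vecMulVec_apply, dotProduct, Matrix.diag]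

lemma swap_dot {M : Matrix (Fin n) (Fin n) ℝ} (hM : Mᵀ = M) (v w : Fin n → ℝ) :
    v ⬝ᵥ (M *ᵥ w) = (M *ᵥ v) ⬝ᵥ w := by
  rw [Matrix.dotProduct_mulVec, ← Matrix.mulVec_transpose, hM]

lemma dot_self_nonneg (a : Fin n → ℝ) : 0 ≤ a ⬝ᵥ a :=
  Finset.sum_nonneg fun i _ => mul_self_nonneg _

lemma arith1 (c ρ : ℝ) (hd : (0:ℝ) < 1 + c * ρ) :
    c * (1 - (c / (1 + c * ρ)) * ρ) = c / (1 + c * ρ) := by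
  field_simp
  ring

lemma arith2 (t ψ φ ρ c : ℝ) (hd : (0:ℝ) < 1 + c * ρ) :
    t - (c / (1 + c * ρ)) * ψ - ((c / (1 + c * ρ)) * ψ
        - (c / (1 + c * ρ)) * ((c / (1 + c * ρ)) * (φ * φ)))
      = t - 2 * c * ψ / (1 + c * ρ) + c ^ 2 * φ ^ 2 / (1 + c * ρ) ^ 2 := by
  field_simp
  ring

end helpers

set_option maxHeartbeats 1600000 in
/-- Leave-one-out identity for the trace of the squared inverse: for `W` real symmetric
positive definite, `c > 0`, `V = W + c z zᵀ`, `ρ = zᵀ W⁻¹ z`, `φ = zᵀ W⁻² z` and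
`ψ = zᵀ W⁻³ z`,
`trace(V⁻²) = trace(W⁻²) − 2cψ/(1 + cρ) + c²φ²/(1 + cρ)²`; moreover, if `W − Iₙ` is
positive semidefinite, then `|trace(V⁻²) − trace(W⁻²)| < 3`. -/
theorem leave_one_out_trace_sq_identity
    {n : ℕ} (W : Matrix (Fin n) (Fin n) ℝ) (hW : W.PosDef)
    (z : Fin n → ℝ) (c : ℝ) (hc : 0 < c) :
    (Matrix.trace ((W + c • vecMulVec z z)⁻¹ * (W + c • vecMulVec z z)⁻¹)
        = Matrix.trace (W⁻¹ * W⁻¹)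
          - 2 * c * (z ⬝ᵥ ((W⁻¹ * W⁻¹ * W⁻¹) *ᵥ z)) / (1 + c * (z ⬝ᵥ (W⁻¹ *ᵥ z)))
          + c ^ 2 * (z ⬝ᵥ ((W⁻¹ * W⁻¹) *ᵥ z)) ^ 2 /
              (1 + c * (z ⬝ᵥ (W⁻¹ *ᵥ z))) ^ 2) ∧
    ((W - 1).PosSemidef →
      |Matrix.trace ((W + c • vecMulVec z z)⁻¹ * (W + c • vecMulVec z z)⁻¹)
          - Matrix.trace (W⁻¹ * W⁻¹)| < 3) := by
  set A := W⁻¹ with hAdef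
  have hdet : IsUnit W.det := (Matrix.isUnit_iff_isUnit_det W).mp hW.isUnit
  have hWA : W * A = 1 := Matrix.mul_nonsing_inv W hdet
  have hWsym : Wᵀ = W := by
    have h := hW.isHermitian
    ext i j; simpa using congr_fun (congr_fun h i) j
  have hAsym : Aᵀ = A := by
    have h := hW.isHermitian.inv
    ext i j; simpa using congr_fun (congr_fun h i) j
  have hApsd : A.PosSemidef := hW.inv.posSemidef
  set ρ := z ⬝ᵥ (A *ᵥ z) with hρdef
  set φ := z ⬝ᵥ ((A * A) *ᵥ z) with hφdef
  set ψ := z ⬝ᵥ ((A * A * A) *ᵥ z) with hψdef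
  have hρ0 : 0 ≤ ρ := by simpa using hApsd.dotProduct_mulVec_nonneg z
  have hd : (0:ℝ) < 1 + c * ρ := by positivity
  set k := c / (1 + c * ρ) with hkdef
  set y := A *ᵥ z with hydef
  -- key dot product identities
  have hφy : φ = y ⬝ᵥ y := by
    rw [hφdef, ← Matrix.mulVec_mulVec, swap_dot hAsym]
  have hψy : ψ = y ⬝ᵥ (A *ᵥ y) := by
    rw [hψdef, ← Matrix.mulVec_mulVec, ← Matrix.mulVec_mulVec, swap_dot hAsym]
  have hWy : W *ᵥ y = z := by
    rw [hydef, Matrix.mulVec_mulVec, hWA, Matrix.one_mulVec]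
  -- Sherman-Morrison
  have hVinv : (W + c • vecMulVec z z)⁻¹ = A - k • vecMulVec y y := by
    apply Matrix.inv_eq_right_inv
    have h1 : W * (A - k • vecMulVec y y) = 1 - k • vecMulVec z y := by
      rw [Matrix.mul_sub, hWA, Matrix.mul_smul, mul_vecMulVec', hWy]
    have h2 : vecMulVec z z * (A - k • vecMulVec y y)
        = (1 - k * ρ) • vecMulVec z y := by
      rw [Matrix.mul_sub, Matrix.mul_smul, vecMulVec_mul', hAsym, ← hydef,
        vecMulVec_mul_vecMulVec', smul_smul, ← hρdef, sub_smul, one_smul]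
    calc (W + c • vecMulVec z z) * (A - k • vecMulVec y y)
        = W * (A - k • vecMulVec y y)
            + c • (vecMulVec z z * (A - k • vecMulVec y y)) := by
          rw [Matrix.add_mul, Matrix.smul_mul]
      _ = 1 - k • vecMulVec z y + (c * (1 - k * ρ)) • vecMulVec z y := by
          rw [h1, h2, smul_smul]
      _ = 1 := by rw [hkdef, arith1 c ρ hd, ← hkdef]; abel
  -- the trace identity
  have hpart1 : Matrix.trace ((A - k • vecMulVec y y) * (A - k • vecMulVec y y))
      = Matrix.trace (A * A) - 2 * c * ψ / (1 + c * ρ)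
        + c ^ 2 * φ ^ 2 / (1 + c * ρ) ^ 2 := by
    have expand : (A - k • vecMulVec y y) * (A - k • vecMulVec y y)
        = A * A - k • vecMulVec (A *ᵥ y) y
          - k • (vecMulVec y (A *ᵥ y)
              - k • ((y ⬝ᵥ y) • vecMulVec y y)) := by
      rw [Matrix.sub_mul, Matrix.mul_sub, Matrix.mul_smul, mul_vecMulVec',
        Matrix.smul_mul, Matrix.mul_sub, vecMulVec_mul', hAsym, Matrix.mul_smul,
        vecMulVec_mul_vecMulVec']
    rw [expand]
    simp only [Matrix.trace_sub, Matrix.trace_smul, trace_vecMulVec', smul_eq_mul,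
      dotProduct_comm (A *ᵥ y) y]
    rw [← hψy, ← hφy, hkdef]
    clear_value A ρ φ ψ k y
    field_simp
    ring
  constructor
  · rw [hVinv]; exact hpart1
  · intro hWI
    have hWIsym : (W - 1)ᵀ = W - 1 := by
      rw [Matrix.transpose_sub, hWsym, Matrix.transpose_one]
    have hψ0 : 0 ≤ ψ := by rw [hψy]; simpa using hApsd.dotProduct_mulVec_nonneg y
    have hφ0 : 0 ≤ φ := by rw [hφy]; exact dot_self_nonneg y
    have hφρ : φ ≤ ρ := by
      have h1 : (0:ℝ) ≤ y ⬝ᵥ ((W - 1) *ᵥ y) := by simpa using hWI.dotProduct_mulVec_nonneg y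
      have h2 : y ⬝ᵥ ((W - 1) *ᵥ y) = ρ - φ := by
        rw [Matrix.sub_mulVec, Matrix.one_mulVec, dotProduct_sub, hWy,
          dotProduct_comm y z, hρdef, hφy, hydef]
      linarith
    -- ψ ≤ φ
    set u := A *ᵥ y with hudef
    have hWu : W *ᵥ u = y := by
      rw [hudef, Matrix.mulVec_mulVec, hWA, Matrix.one_mulVec]
    have hφu : φ = u ⬝ᵥ (W *ᵥ (W *ᵥ u)) := by
      rw [hφy, ← hWu, swap_dot hWsym]
      exact dotProduct_comm _ _
    have hψu : ψ = u ⬝ᵥ (W *ᵥ u) := by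
      rw [hψy, ← hWu]
      exact dotProduct_comm _ _
    have hψφ : ψ ≤ φ := by
      have hvec : W *ᵥ (W *ᵥ u) - W *ᵥ u
          = (W - 1) *ᵥ ((W - 1) *ᵥ u) + (W - 1) *ᵥ u := by
        simp only [Matrix.sub_mulVec, Matrix.one_mulVec, Matrix.mulVec_sub]
        abel
      have h1 : (0:ℝ) ≤ u ⬝ᵥ ((W - 1) *ᵥ ((W - 1) *ᵥ u)) := by
        rw [swap_dot hWIsym]
        exact dot_self_nonneg _
      have h2 : (0:ℝ) ≤ u ⬝ᵥ ((W - 1) *ᵥ u) := by simpa using hWI.dotProduct_mulVec_nonneg u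
      have h3 : φ - ψ = u ⬝ᵥ ((W - 1) *ᵥ ((W - 1) *ᵥ u)) + u ⬝ᵥ ((W - 1) *ᵥ u) := by
        rw [hφu, hψu, ← dotProduct_add, ← hvec, dotProduct_sub]
      linarith
    -- final bound
    rw [hVinv, hpart1]
    clear_value k u y ψ φ ρ A
    have hcψ : c * ψ ≤ c * ρ := by nlinarith
    have hcφ : c * φ ≤ c * ρ := by nlinarith
    have hb1 : 2 * c * ψ / (1 + c * ρ) < 2 := by
      rw [div_lt_iff₀ hd]; nlinarith
    have hb1' : 0 ≤ 2 * c * ψ / (1 + c * ρ) := by positivity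
    have hb2 : c ^ 2 * φ ^ 2 / (1 + c * ρ) ^ 2 < 1 := by
      have ha : 0 ≤ c * φ := by positivity
      have hb : c * φ < 1 + c * ρ := by linarith
      rw [div_lt_one (by positivity)]
      nlinarith [ha, hb, mul_self_nonneg (c * φ)]
    have hb2' : 0 ≤ c ^ 2 * φ ^ 2 / (1 + c * ρ) ^ 2 := by positivity
    have hE : Matrix.trace (A * A) - 2 * c * ψ / (1 + c * ρ)
          + c ^ 2 * φ ^ 2 / (1 + c * ρ) ^ 2 - Matrix.trace (A * A)
        = c ^ 2 * φ ^ 2 / (1 + c * ρ) ^ 2 - 2 * c * ψ / (1 + c * ρ) := by ring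
    rw [hE, abs_lt]
    constructor <;> [linarith; linarith]
end

section
/- Let τ > 1 and γ > 0, and let f_τ be the Marčenko–Pastur density with ratio index τ (so that ∫_{b₋(τ)}^{b₊(τ)} f_τ(x) dx = 1/τ). Set I₁ = ∫_{b₋(τ)}^{b₊(τ)} f_τ(x)/(1 + γx) dx and I₂ = ∫_{b₋(τ)}^{b₊(τ)} f_τ(x)/(1 + γx)² dx. Then (I₁ + 1 − 1/τ)² < I₂ + 1 − 1/τ, and I₁ < 1/τ, and consequently d_{γ,τ} := −[(I₁ + 1 − 1/τ)² − (I₂ + 1 − 1/τ)] / [(I₁ + 1 − 1/τ)(1/τ − I₁)] > 0. -/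
open MeasureTheory

/-- Left edge `b₋(τ) = (1 − √τ)²` of the Marčenko–Pastur distribution. -/
noncomputable def mpLower (τ : ℝ) : ℝ := (1 - Real.sqrt τ) ^ 2

/-- Right edge `b₊(τ) = (1 + √τ)²` of the Marčenko–Pastur distribution. -/
noncomputable def mpUpper (τ : ℝ) : ℝ := (1 + Real.sqrt τ) ^ 2

/-- The Marčenko–Pastur density with ratio index `τ`:
`f_τ(x) = √((b₊(τ) − x)(x − b₋(τ))) / (2πτx)` on `[b₋(τ), b₊(τ)]`, and `0` elsewhere. -/
noncomputable def mpDensity (τ : ℝ) (x : ℝ) : ℝ :=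
  if x ∈ Set.Icc (mpLower τ) (mpUpper τ) then
    Real.sqrt ((mpUpper τ - x) * (x - mpLower τ)) / (2 * Real.pi * τ * x)
  else 0

open Real in
lemma mp_ftc {a b : ℝ} (ha : 0 < a) (hab : a < b) :
    ∫ x in a..b, Real.sqrt ((b - x) * (x - a)) / x
      = Real.pi * ((a + b) / 2 - Real.sqrt (a * b)) := by
  have hb : 0 < b := ha.trans hab
  have hba : (0:ℝ) < b - a := by linarith
  set F : ℝ → ℝ := fun x =>
    Real.sqrt ((b - x) * (x - a))
    + ((a + b) / 2) * Real.arcsin ((2*x - (a+b)) / (b - a))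
    - Real.sqrt (a*b) * Real.arcsin (((a+b)*x - 2*(a*b)) / ((b-a)*x)) with hF
  have hcont : ContinuousOn F (Set.Icc a b) := by
    apply ContinuousOn.sub
    apply ContinuousOn.add
    · exact (Real.continuous_sqrt.comp (by continuity)).continuousOn
    · exact (continuous_const.mul (Real.continuous_arcsin.comp (by continuity))).continuousOn
    · apply ContinuousOn.mul continuousOn_const
      apply Real.continuous_arcsin.comp_continuousOn
      apply ContinuousOn.div (by fun_prop) (by fun_prop)
      intro x hx
      have : 0 < x := lt_of_lt_of_le ha hx.1
      positivity
  have hderiv : ∀ x ∈ Set.Ioo a b,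
      HasDerivAt F (Real.sqrt ((b - x) * (x - a)) / x) x := by
    intro x hx
    have hx0 : 0 < x := ha.trans hx.1
    have hbx : 0 < b - x := by linarith [hx.2]
    have hxa : 0 < x - a := by linarith [hx.1]
    set R := Real.sqrt ((b - x) * (x - a)) with hR
    have hRpos : 0 < R := Real.sqrt_pos.mpr (by positivity)
    have hRsq : R ^ 2 = (b - x) * (x - a) := Real.sq_sqrt (by positivity)
    have hRne : R ≠ 0 := hRpos.ne'
    -- term 1
    have h1 : HasDerivAt (fun y => Real.sqrt ((b - y) * (y - a)))
        (((a + b) - 2*x) / (2 * R)) x := by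
      have hinner : HasDerivAt (fun y => (b - y) * (y - a)) ((a + b) - 2*x) x := by
        have := (((hasDerivAt_id x).const_sub b).mul ((hasDerivAt_id x).sub_const a))
        refine this.congr_deriv (Eq.symm ?_)
        simp [id]; ring
      exact hinner.sqrt (by positivity)
    -- term 2
    have h2 : HasDerivAt (fun y => ((a + b) / 2) * Real.arcsin ((2*y - (a+b)) / (b - a)))
        ((a + b) / (2 * R)) x := by
      have hu : HasDerivAt (fun y => (2*y - (a+b)) / (b - a)) (2 / (b - a)) x := by
        have := (((hasDerivAt_id x).const_mul 2).sub_const (a + b)).div_const (b - a)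
        refine this.congr_deriv (Eq.symm ?_)
        simp [id]
      have harg1 : ((2*x - (a+b)) / (b - a)) ≠ -1 := by
        intro h; rw [div_eq_iff hba.ne'] at h; nlinarith [hx.1, hx.2]
      have harg2 : ((2*x - (a+b)) / (b - a)) ≠ 1 := by
        intro h; rw [div_eq_iff hba.ne'] at h; nlinarith [hx.1, hx.2]
      have hsq : Real.sqrt (1 - ((2*x - (a+b)) / (b - a)) ^ 2) = 2 / (b-a) * R := by
        have he : 1 - ((2*x - (a+b)) / (b - a)) ^ 2 = (2 / (b-a))^2 * ((b - x) * (x - a)) := by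
          field_simp; ring
        rw [he, Real.sqrt_mul (sq_nonneg _), Real.sqrt_sq (by positivity), ← hR]
      have hc := ((Real.hasDerivAt_arcsin harg1 harg2).comp x hu).const_mul ((a + b) / 2)
      refine hc.congr_deriv (Eq.symm ?_)
      rw [hsq]
      field_simp
    -- term 3
    have h3 : HasDerivAt (fun y => Real.sqrt (a*b) * Real.arcsin (((a+b)*y - 2*(a*b)) / ((b-a)*y)))
        ((a * b) / (x * R)) x := by
      have hu : HasDerivAt (fun y => ((a+b)*y - 2*(a*b)) / ((b-a)*y))
          (2 * (a*b) / ((b-a) * x^2)) x := by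
        have hnum : HasDerivAt (fun y => (a+b)*y - 2*(a*b)) (a+b) x := by
          have := ((hasDerivAt_id x).const_mul (a+b)).sub_const (2*(a*b))
          refine this.congr_deriv (Eq.symm ?_)
          simp [id]
        have hden : HasDerivAt (fun y => (b-a)*y) (b-a) x := by
          have := (hasDerivAt_id x).const_mul (b-a)
          refine this.congr_deriv (Eq.symm ?_)
          simp [id]
        have := hnum.div hden (by positivity)
        refine this.congr_deriv (Eq.symm ?_)
        field_simp
        ring
      have harg1 : (((a+b)*x - 2*(a*b)) / ((b-a)*x)) ≠ -1 := by
        intro h; rw [div_eq_iff (by positivity : ((b-a)*x) ≠ 0)] at h; nlinarith [hx.1, hx.2]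
      have harg2 : (((a+b)*x - 2*(a*b)) / ((b-a)*x)) ≠ 1 := by
        intro h; rw [div_eq_iff (by positivity : ((b-a)*x) ≠ 0)] at h; nlinarith [hx.1, hx.2]
      have hsq : Real.sqrt (1 - (((a+b)*x - 2*(a*b)) / ((b-a)*x)) ^ 2)
          = 2 / ((b - a) * x) * (Real.sqrt (a*b) * R) := by
        have he : 1 - (((a+b)*x - 2*(a*b)) / ((b-a)*x)) ^ 2
            = (2 / ((b-a)*x))^2 * ((a*b) * ((b - x) * (x - a))) := by
          field_simp; ring
        rw [he, Real.sqrt_mul (sq_nonneg _), Real.sqrt_sq (by positivity),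
          Real.sqrt_mul (by positivity : (0:ℝ) ≤ a*b), ← hR]
      have hab2 : Real.sqrt (a*b) * Real.sqrt (a*b) = a * b := Real.mul_self_sqrt (by positivity)
      have hsab : 0 < Real.sqrt (a*b) := Real.sqrt_pos.mpr (by positivity)
      have hc := ((Real.hasDerivAt_arcsin harg1 harg2).comp x hu).const_mul (Real.sqrt (a*b))
      refine hc.congr_deriv (Eq.symm ?_)
      rw [hsq]
      rw [div_eq_iff (by positivity)]
      field_simp
    have hsum := (h1.add h2).sub h3
    refine hsum.congr_deriv (Eq.symm ?_)
    rw [div_eq_iff hx0.ne']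
    field_simp
    linear_combination 2 * hRsq
  have hint : IntervalIntegrable (fun x => Real.sqrt ((b - x) * (x - a)) / x) volume a b := by
    apply ContinuousOn.intervalIntegrable
    apply ContinuousOn.div (by fun_prop) (by fun_prop)
    intro x hx
    rw [Set.uIcc_of_le hab.le] at hx
    have : 0 < x := lt_of_lt_of_le ha hx.1
    positivity
  rw [intervalIntegral.integral_eq_sub_of_hasDerivAt_of_le hab.le hcont hderiv hint]
  have f1 : (2*b - (a+b)) / (b - a) = 1 := by rw [div_eq_one_iff_eq hba.ne']; ring
  have f2 : (2*a - (a+b)) / (b - a) = -1 := by rw [div_eq_iff hba.ne']; ring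
  have f3 : ((a+b)*b - 2*(a*b)) / ((b-a)*b) = 1 := by
    rw [div_eq_one_iff_eq (by positivity)]; ring
  have f4 : ((a+b)*a - 2*(a*b)) / ((b-a)*a) = -1 := by
    rw [div_eq_iff (by positivity)]; ring
  simp only [hF]
  rw [show (b - b) * (b - a) = 0 by ring, show (b - a) * (a - a) = 0 by ring, f1, f2, f3, f4,
    Real.arcsin_one, Real.arcsin_neg_one, Real.sqrt_zero]
  ring

/-- Positivity of the limiting constant `d_{γ,τ}` in the case `τ > 1`: with
`I₁ = ∫ f_τ(x)/(1 + γx) dx` and `I₂ = ∫ f_τ(x)/(1 + γx)² dx` (so that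
`∫ f_τ = 1/τ`), one has `(I₁ + 1 − 1/τ)² < I₂ + 1 − 1/τ`, `I₁ < 1/τ` and hence
`d_{γ,τ} = −[(I₁ + 1 − 1/τ)² − (I₂ + 1 − 1/τ)] / [(I₁ + 1 − 1/τ)(1/τ − I₁)] > 0`. -/
theorem mp_limit_constant_pos_high_dim
    (τ γ : ℝ) (hτ : 1 < τ) (hγ : 0 < γ) :
    ((∫ x in Set.Icc (mpLower τ) (mpUpper τ), mpDensity τ x / (1 + γ * x)) + 1 - 1 / τ) ^ 2 <
        (∫ x in Set.Icc (mpLower τ) (mpUpper τ), mpDensity τ x / (1 + γ * x) ^ 2) + 1 - 1 / τ ∧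
    (∫ x in Set.Icc (mpLower τ) (mpUpper τ), mpDensity τ x / (1 + γ * x)) < 1 / τ ∧
    0 < -((((∫ x in Set.Icc (mpLower τ) (mpUpper τ), mpDensity τ x / (1 + γ * x)) + 1 - 1 / τ) ^ 2 -
            ((∫ x in Set.Icc (mpLower τ) (mpUpper τ), mpDensity τ x / (1 + γ * x) ^ 2) + 1 - 1 / τ)) /
          ((((∫ x in Set.Icc (mpLower τ) (mpUpper τ), mpDensity τ x / (1 + γ * x)) + 1 - 1 / τ)) *
            (1 / τ - (∫ x in Set.Icc (mpLower τ) (mpUpper τ), mpDensity τ x / (1 + γ * x))))) := by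
  have hτ0 : (0:ℝ) < τ := by linarith
  have hπ : (0:ℝ) < Real.pi := Real.pi_pos
  set s := Real.sqrt τ with hsdef
  have hs2 : s ^ 2 = τ := Real.sq_sqrt hτ0.le
  have hs0 : 0 ≤ s := Real.sqrt_nonneg τ
  have hs1 : 1 < s := by nlinarith [hs2, hs0]
  set a := mpLower τ with hadef
  set b := mpUpper τ with hbdef
  have haval : a = (1 - s)^2 := rfl
  have hbval : b = (1 + s)^2 := rfl
  have ha : 0 < a := by
    rw [haval]; nlinarith [mul_pos (sub_pos.mpr hs1) (sub_pos.mpr hs1)]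
  have hab : a < b := by rw [haval, hbval]; nlinarith
  have hb : 0 < b := ha.trans hab
  have hsum : a + b = 2 + 2*τ := by rw [haval, hbval]; linear_combination 2*hs2
  have hprod : Real.sqrt (a*b) = τ - 1 := by
    have h1 : a*b = (τ-1)^2 := by rw [haval, hbval]; linear_combination (s^2 + τ - 2) * hs2
    rw [h1, Real.sqrt_sq (by linarith)]
  set g : ℝ → ℝ := fun x => Real.sqrt ((b - x) * (x - a)) / (2 * Real.pi * τ * x) with hgdef
  have hEq : ∀ x ∈ Set.Icc a b, mpDensity τ x = g x := by
    intro x hx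
    rw [mpDensity, if_pos (show x ∈ Set.Icc (mpLower τ) (mpUpper τ) from hx)]
  -- total mass
  have hM : ∫ x in Set.Icc a b, g x = 1/τ := by
    rw [MeasureTheory.integral_Icc_eq_integral_Ioc, ← intervalIntegral.integral_of_le hab.le]
    have hcongr : ∀ x ∈ Set.uIcc a b, g x = (Real.sqrt ((b - x) * (x - a)) / x) / (2*Real.pi*τ) := by
      intro x hx
      rw [Set.uIcc_of_le hab.le] at hx
      have hx0 : 0 < x := lt_of_lt_of_le ha hx.1
      rw [hgdef, div_div]
      ring_nf
    rw [intervalIntegral.integral_congr hcongr, intervalIntegral.integral_div,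
      mp_ftc ha hab, hsum, hprod]
    field_simp
    ring
  -- positivity of denominators on Icc
  have hden : ∀ x ∈ Set.Icc a b, 0 < 1 + γ * x := by
    intro x hx
    have : 0 < x := lt_of_lt_of_le ha hx.1
    nlinarith
  have hgnn : ∀ x ∈ Set.Icc a b, 0 ≤ g x := by
    intro x hx
    have hx0 : 0 < x := lt_of_lt_of_le ha hx.1
    exact div_nonneg (Real.sqrt_nonneg _) (by positivity)
  -- continuity / integrability
  have hcg : ContinuousOn g (Set.Icc a b) := by
    apply ContinuousOn.div (by fun_prop) (by fun_prop)
    intro x hx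
    have : 0 < x := lt_of_lt_of_le ha hx.1
    positivity
  have hcd : ContinuousOn (fun x => 1 + γ * x) (Set.Icc a b) := by fun_prop
  have hint0 : IntegrableOn g (Set.Icc a b) := hcg.integrableOn_Icc
  have hint1 : IntegrableOn (fun x => g x / (1 + γ * x)) (Set.Icc a b) :=
    (hcg.div hcd (fun x hx => (hden x hx).ne')).integrableOn_Icc
  have hint2 : IntegrableOn (fun x => g x / (1 + γ * x)^2) (Set.Icc a b) :=
    (hcg.div (hcd.pow 2) (fun x hx => pow_ne_zero 2 (hden x hx).ne')).integrableOn_Icc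
  -- rewrite the goal integrals
  have hm_eq : (∫ x in Set.Icc a b, mpDensity τ x / (1 + γ * x))
      = ∫ x in Set.Icc a b, g x / (1 + γ * x) :=
    setIntegral_congr_fun measurableSet_Icc (fun x hx => by rw [hEq x hx])
  have hI2_eq : (∫ x in Set.Icc a b, mpDensity τ x / (1 + γ * x) ^ 2)
      = ∫ x in Set.Icc a b, g x / (1 + γ * x) ^ 2 :=
    setIntegral_congr_fun measurableSet_Icc (fun x hx => by rw [hEq x hx])
  rw [hm_eq, hI2_eq]
  set m := ∫ x in Set.Icc a b, g x / (1 + γ * x) with hmdef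
  set I2 := ∫ x in Set.Icc a b, g x / (1 + γ * x) ^ 2 with hI2def
  clear_value m I2
  -- m nonneg
  have hm0 : 0 ≤ m := by
    rw [hmdef]
    exact setIntegral_nonneg measurableSet_Icc (fun x hx => div_nonneg (hgnn x hx) (hden x hx).le)
  -- m < 1/τ
  have hmlt : m < 1/τ := by
    have h1 : m ≤ (1/τ) / (1 + γ * a) := by
      have h2 : ∫ x in Set.Icc a b, g x / (1 + γ * a) = (1/τ)/(1 + γ * a) := by
        rw [MeasureTheory.integral_div, hM]
      rw [hmdef, ← h2]
      apply setIntegral_mono_on hint1 (hint0.div_const _) measurableSet_Icc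
      intro x hx
      have hga : 0 < 1 + γ * a := by positivity
      have hx1 : 1 + γ * a ≤ 1 + γ * x := by nlinarith [hx.1]
      gcongr
      exact hgnn x hx
    have h3 : (1/τ) / (1 + γ * a) < 1/τ := by
      apply div_lt_self (by positivity)
      nlinarith
    linarith
  -- variance inequality
  set t := m + 1 - 1/τ with htdef
  clear_value t
  have hvar : 0 ≤ I2 - 2*t*m + t^2 * (1/τ) := by
    have hpt : ∀ x ∈ Set.Icc a b,
        g x * (1/(1 + γ * x) - t)^2
          = g x / (1 + γ * x)^2 - 2*t * (g x / (1 + γ * x)) + t^2 * g x := by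
      intro x hx
      have h := (hden x hx).ne'
      field_simp
      ring
    have hsplit : ∫ x in Set.Icc a b, g x * (1/(1 + γ * x) - t)^2
        = I2 - 2*t*m + t^2 * (1/τ) := by
      rw [setIntegral_congr_fun measurableSet_Icc hpt]
      have hA : IntegrableOn (fun x => g x / (1 + γ * x)^2 - 2*t * (g x / (1 + γ * x)))
          (Set.Icc a b) := hint2.sub (hint1.const_mul (2*t))
      have hB : IntegrableOn (fun x => t^2 * g x) (Set.Icc a b) := hint0.const_mul (t^2)
      have hC : IntegrableOn (fun x => 2*t * (g x / (1 + γ * x))) (Set.Icc a b) :=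
        hint1.const_mul (2*t)
      rw [MeasureTheory.integral_add hA hB, MeasureTheory.integral_sub hint2 hC,
        MeasureTheory.integral_const_mul, MeasureTheory.integral_const_mul, hM, hmdef, hI2def]
    rw [← hsplit]
    exact setIntegral_nonneg measurableSet_Icc
      (fun x hx => mul_nonneg (hgnn x hx) (sq_nonneg _))
  have hkey : t^2 < I2 + 1 - 1/τ := by
    have hc : 0 < 1 - 1/τ := by
      have : 1/τ < 1 := by rw [div_lt_one hτ0]; linarith
      linarith
    have hq : 0 < (1/τ - m)^2 := pow_pos (by linarith) 2
    have hid : I2 + 1 - 1/τ - t^2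
        = (I2 - 2*t*m + t^2 * (1/τ)) + (1 - 1/τ)*(1/τ - m)^2 := by
      rw [htdef]; ring
    have ht2 : t^2 = (m + 1 - 1/τ)^2 := by rw [htdef]
    linarith [hvar, hid, mul_pos hc hq, ht2]
  refine ⟨hkey, hmlt, ?_⟩
  have hnum : t^2 - (I2 + 1 - 1/τ) < 0 := by linarith
  have hdenpos : 0 < t * (1/τ - m) := by
    apply mul_pos
    · have h5 : 0 < 1 - 1/τ := by
        have : 1/τ < 1 := by rw [div_lt_one hτ0]; linarith
        linarith
      rw [htdef]; linarith
    · linarith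
  exact neg_pos.mpr (div_neg_of_neg_of_pos hnum hdenpos)
end

section
/- Let γ₀ ∈ ℝ and η > 0, and set J = (γ₀ − η, γ₀ + η). For each n, let s_n be a random function from J to ℝ that is almost surely nonincreasing on J, and let s̄ : J → ℝ be a deterministic function that is continuous at γ₀. Suppose that for each fixed γ ∈ J, s_n(γ) → s̄(γ) in probability as n → ∞, and that γ̂_n are random variables taking values such that γ̂_n → γ₀ in probability. Then s_n(γ̂_n) → s̄(γ₀) in probability as n → ∞. -/
open MeasureTheory Filter

/-- If random functions `sₙ` are almost surely nonincreasing on an interval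
`J = (γ₀ − η, γ₀ + η)`, converge pointwise in probability on `J` to a deterministic
function `s̄` that is continuous at `γ₀`, and `γ̂ₙ → γ₀` in probability, then
`sₙ(γ̂ₙ) → s̄(γ₀)` in probability. -/
theorem plug_in_convergence_of_monotone_random_functions
    {Ω : Type*} [MeasurableSpace Ω] (μ : Measure Ω) [IsProbabilityMeasure μ]
    (γ0 η : ℝ) (hη : 0 < η)
    (s : ℕ → Ω → ℝ → ℝ) (sbar : ℝ → ℝ)
    (hmeas : ∀ n, ∀ γ ∈ Set.Ioo (γ0 - η) (γ0 + η), Measurable (fun ω => s n ω γ))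
    (hanti : ∀ n, ∀ᵐ ω ∂μ, AntitoneOn (s n ω) (Set.Ioo (γ0 - η) (γ0 + η)))
    (hcont : ContinuousAt sbar γ0)
    (hconv : ∀ γ ∈ Set.Ioo (γ0 - η) (γ0 + η), ∀ δ : ℝ, 0 < δ →
      Tendsto (fun n => μ {ω | δ < |s n ω γ - sbar γ|}) atTop (nhds 0))
    (γhat : ℕ → Ω → ℝ)
    (hγhat : ∀ δ : ℝ, 0 < δ →
      Tendsto (fun n => μ {ω | δ < |γhat n ω - γ0|}) atTop (nhds 0)) :
    ∀ δ : ℝ, 0 < δ →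
      Tendsto (fun n => μ {ω | δ < |s n ω (γhat n ω) - sbar γ0|}) atTop (nhds 0) := by

  intro δ hδ
  rcases Metric.continuousAt_iff.mp hcont (δ/2) (by linarith) with ⟨r, hr, hball⟩
  set ε := min (r/2) (η/2) with hεdef
  have hε0 : 0 < ε := lt_min (by linarith) (by linarith)
  have hεη : ε < η := lt_of_le_of_lt (min_le_right _ _) (by linarith)
  have hεr : ε < r := lt_of_le_of_lt (min_le_left _ _) (by linarith)
  have hmem1 : γ0 - ε ∈ Set.Ioo (γ0 - η) (γ0 + η) := ⟨by linarith, by linarith⟩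
  have hmem2 : γ0 + ε ∈ Set.Ioo (γ0 - η) (γ0 + η) := ⟨by linarith, by linarith⟩
  have hsb1 : |sbar (γ0 - ε) - sbar γ0| < δ/2 := by
    have := hball (x := γ0 - ε) (by
      simp only [Real.dist_eq]
      rw [abs_of_nonpos (by linarith)]; linarith)
    simpa [Real.dist_eq] using this
  have hsb2 : |sbar (γ0 + ε) - sbar γ0| < δ/2 := by
    have := hball (x := γ0 + ε) (by
      simp only [Real.dist_eq]
      rw [abs_of_nonneg (by linarith)]; linarith)
    simpa [Real.dist_eq] using this
  have key : ∀ n, μ {ω | δ < |s n ω (γhat n ω) - sbar γ0|}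
      ≤ μ {ω | ε/2 < |γhat n ω - γ0|}
        + μ {ω | δ/2 < |s n ω (γ0 - ε) - sbar (γ0 - ε)|}
        + μ {ω | δ/2 < |s n ω (γ0 + ε) - sbar (γ0 + ε)|} := by
    intro n
    calc μ {ω | δ < |s n ω (γhat n ω) - sbar γ0|}
        ≤ μ ({ω | ε/2 < |γhat n ω - γ0|} ∪
            ({ω | δ/2 < |s n ω (γ0 - ε) - sbar (γ0 - ε)|} ∪
             {ω | δ/2 < |s n ω (γ0 + ε) - sbar (γ0 + ε)|})) := by
          apply measure_mono_ae
          filter_upwards [hanti n] with ω hω hmemS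
          have hS : δ < |s n ω (γhat n ω) - sbar γ0| := hmemS
          change ω ∈ {ω | ε/2 < |γhat n ω - γ0|} ∪ ({ω | δ/2 < |s n ω (γ0 - ε) - sbar (γ0 - ε)|} ∪ {ω | δ/2 < |s n ω (γ0 + ε) - sbar (γ0 + ε)|})
          by_contra hnot
          simp only [Set.mem_union, Set.mem_setOf_eq, not_or, not_lt] at hnot
          obtain ⟨h1, h2, h3⟩ := hnot
          rw [abs_le] at h1 h2 h3
          have hγmem : γhat n ω ∈ Set.Ioo (γ0 - η) (γ0 + η) :=
            ⟨by linarith [h1.1], by linarith [h1.2]⟩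
          have hle1 : s n ω (γhat n ω) ≤ s n ω (γ0 - ε) :=
            hω hmem1 hγmem (by linarith [h1.1])
          have hle2 : s n ω (γ0 + ε) ≤ s n ω (γhat n ω) :=
            hω hγmem hmem2 (by linarith [h1.2])
          rw [lt_abs] at hS
          rw [abs_lt] at hsb1 hsb2
          rcases hS with h | h <;> linarith
      _ ≤ _ := by
          refine (measure_union_le _ _).trans ?_
          rw [add_assoc]
          exact add_le_add le_rfl (measure_union_le _ _)
  have h1 := hγhat (ε/2) (by linarith)
  have h2 := hconv _ hmem1 (δ/2) (by linarith)
  have h3 := hconv _ hmem2 (δ/2) (by linarith)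
  have hsum : Tendsto (fun n => μ {ω | ε/2 < |γhat n ω - γ0|}
      + μ {ω | δ/2 < |s n ω (γ0 - ε) - sbar (γ0 - ε)|}
      + μ {ω | δ/2 < |s n ω (γ0 + ε) - sbar (γ0 + ε)|}) atTop (nhds 0) := by
    have := (h1.add h2).add h3
    simpa using this
  exact tendsto_of_tendsto_of_tendsto_of_le_of_le tendsto_const_nhds hsum
    (fun n => zero_le) key
end
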